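/- Aubin–Nitsche Lemma (reformulated with an explicit bound in place of the supremum): Let V_h ⊆ V be a closed subspace, let u ∈ V satisfy a(u,v) = l(v) for all v ∈ V, and let u_h ∈ V_h satisfy a(u_h, v_h) = l(v_h) for all v_h ∈ V_h. Suppose that for every w ∈ W there exists a solution v_w ∈ V of the dual problem a(φ, v_w) = ⟨w, ι(φ)⟩_W for all φ ∈ V, and let S ≥ 0 be a constant such that inf_{v_h ∈ V_h} ‖v_w − v_h‖_V ≤ S‖w‖_W for every w ∈ W. Then ‖ι(u) − ι(u_h)‖_W ≤ γ · ‖u − u_h‖_V · S. -/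

import Mathlib

theorem aubin_nitsche
    {V : Type*} [NormedAddCommGroup V] [InnerProductSpace ℝ V] [CompleteSpace V]
    (a : V →ₗ[ℝ] V →ₗ[ℝ] ℝ) (l : V →L[ℝ] ℝ)
    (γ α : ℝ) (hγ : 0 < γ) (hα : 0 < α)
    (ha_symm : ∀ u v : V, a u v = a v u)
    (ha_cont : ∀ u v : V, |a u v| ≤ γ * ‖u‖ * ‖v‖)
    (ha_coer : ∀ u : V, α * ‖u‖ ^ 2 ≤ a u u)
    {W : Type*} [NormedAddCommGroup W] [InnerProductSpace ℝ W] [CompleteSpace W]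
    (ι : V →L[ℝ] W) (hι : Function.Injective ι)
    (Vh : Submodule ℝ V) (hVh : IsClosed (Vh : Set V))
    (u : V) (hu : ∀ v : V, a u v = l v)
    (uh : V) (huh : uh ∈ Vh) (huh_sol : ∀ vh ∈ Vh, a uh vh = l vh)
    (vw : W → V) (hvw : ∀ w : W, ∀ φ : V, a φ (vw w) = (inner ℝ w (ι φ) : ℝ))
    (S : ℝ) (hS : 0 ≤ S)
    (hbound : ∀ w : W, (⨅ vh : Vh, ‖vw w - (vh : V)‖) ≤ S * ‖w‖) :
    ‖ι u - ι uh‖ ≤ γ * ‖u - uh‖ * S := by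
  set e : V := u - uh with he
  set w : W := ι u - ι uh with hwdef
  have hw : w = ι e := by simp [hwdef, he, map_sub]
  have galerkin : ∀ vh ∈ Vh, a e vh = 0 := by
    intro vh h
    simp only [he, map_sub, LinearMap.sub_apply, hu vh, huh_sol vh h, sub_self]
  have h1 : ‖w‖ ^ 2 = a e (vw w) := by
    rw [hvw w e, ← hw, real_inner_self_eq_norm_sq]
  have key : ∀ vh : Vh, ‖w‖ ^ 2 ≤ γ * ‖e‖ * ‖vw w - (vh : V)‖ := by
    intro vh
    have h2 : a e (vw w) = a e (vw w - (vh : V)) := by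
      rw [(a e).map_sub, galerkin vh vh.2, sub_zero]
    calc ‖w‖ ^ 2 = a e (vw w - (vh : V)) := by rw [h1, h2]
      _ ≤ |a e (vw w - (vh : V))| := le_abs_self _
      _ ≤ γ * ‖e‖ * ‖vw w - (vh : V)‖ := ha_cont _ _
  rcases eq_or_lt_of_le (norm_nonneg e) with he0 | he0
  · have : e = 0 := by simpa using he0.symm
    have hw0 : w = 0 := by rw [hw, this, map_zero]
    rw [hw0, norm_zero, ← he0]
    positivity
  · have hc : 0 < γ * ‖e‖ := mul_pos hγ he0
    have hinf : ‖w‖ ^ 2 / (γ * ‖e‖) ≤ ⨅ vh : Vh, ‖vw w - (vh : V)‖ := by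
      refine le_ciInf fun vh => ?_
      rw [div_le_iff₀ hc]
      calc ‖w‖ ^ 2 ≤ γ * ‖e‖ * ‖vw w - (vh : V)‖ := key vh
        _ = ‖vw w - (vh : V)‖ * (γ * ‖e‖) := by ring
    have h3 : ‖w‖ ^ 2 ≤ γ * ‖e‖ * (S * ‖w‖) := by
      rw [← div_le_iff₀' hc] at *
      exact hinf.trans (hbound w)
    rcases eq_or_lt_of_le (norm_nonneg w) with hw0 | hw0
    · rw [← hw0]
      positivity
    · have : ‖w‖ * ‖w‖ ≤ (γ * ‖e‖ * S) * ‖w‖ := by nlinarith [h3]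
      have := le_of_mul_le_mul_right (by linarith [this] : ‖w‖ * ‖w‖ ≤ (γ * ‖e‖ * S) * ‖w‖) hw0
      exact this
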